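/- Let μ be a Borel measure on ℝ and suppose there exists x₀ ≥ 0 such that μ([−x, ∞)) ≤ x³ e^{√2 x} for all x ≥ x₀. Then for every β > 0, ∫_ℝ e^{−β|x|^{3/2}} dμ(x) < ∞. -/
import Mathlib


open Real MeasureTheory
open scoped ENNReal

/-- Deterministic step from Section 4.1: if a Borel measure `μ` on `ℝ` satisfies
`μ([−x,∞)) ≤ x³ e^{√2 x}` for all large `x`, then `∫ e^{−β|x|^{3/2}} dμ < ∞` for
every `β > 0`, i.e. `μ` belongs to the space `M_{3/2}`. -/
theorem integrable_of_tail_bound (μ : Measure ℝ) (x₀ : ℝ) (hx₀ : 0 ≤ x₀)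
    (htail : ∀ x : ℝ, x₀ ≤ x →
      μ (Set.Ici (-x)) ≤ ENNReal.ofReal (x ^ 3 * Real.exp (Real.sqrt 2 * x)))
    (β : ℝ) (hβ : 0 < β) :
    ∫⁻ x : ℝ, ENNReal.ofReal (Real.exp (-β * |x| ^ ((3 : ℝ) / 2))) ∂μ < ⊤ := by
  set f : ℝ → ℝ≥0∞ := fun x => ENNReal.ofReal (Real.exp (-β * |x| ^ ((3 : ℝ) / 2))) with hf
  set a : ℝ := max 1 (max x₀ (((5 + Real.sqrt 2) / β) ^ 2)) with ha
  have ha1 : (1:ℝ) ≤ a := le_max_left _ _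
  have ha0 : (0:ℝ) ≤ a := by linarith
  have hax₀ : x₀ ≤ a := le_trans (le_max_left _ _) (le_max_right _ _)
  have haβ : ((5 + Real.sqrt 2) / β) ^ 2 ≤ a :=
    le_trans (le_max_right _ _) (le_max_right _ _)
  have hs2 : (0:ℝ) ≤ Real.sqrt 2 := Real.sqrt_nonneg 2
  -- key real inequality
  have key : ∀ t : ℝ, a ≤ t →
      Real.exp (-β * t ^ ((3:ℝ)/2)) * ((t+1) ^ 3 * Real.exp (Real.sqrt 2 * (t+1)))
        ≤ 8 * Real.exp (Real.sqrt 2) * Real.exp (-2 * t) := by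
    intro t ht
    have ht1 : (1:ℝ) ≤ t := le_trans ha1 ht
    have ht0 : (0:ℝ) < t := by linarith
    have hrpow : t ^ ((3:ℝ)/2) = t * Real.sqrt t := by
      rw [show (3:ℝ)/2 = 1 + 1/2 by norm_num, Real.rpow_add ht0, Real.rpow_one,
        ← Real.sqrt_eq_rpow]
    have hsqrt : (5 + Real.sqrt 2) / β ≤ Real.sqrt t := by
      have h0 : (0:ℝ) ≤ (5 + Real.sqrt 2) / β := by positivity
      calc (5 + Real.sqrt 2) / β = Real.sqrt (((5 + Real.sqrt 2)/β)^2) :=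
            (Real.sqrt_sq h0).symm
        _ ≤ Real.sqrt t := Real.sqrt_le_sqrt (le_trans haβ ht)
    have hβt : (5 + Real.sqrt 2) * t ≤ β * t ^ ((3:ℝ)/2) := by
      rw [hrpow]
      have h1 : (5 + Real.sqrt 2) / β * t ≤ Real.sqrt t * t :=
        mul_le_mul_of_nonneg_right hsqrt (le_of_lt ht0)
      have h2 : β * ((5 + Real.sqrt 2) / β * t) = (5 + Real.sqrt 2) * t := by
        field_simp
      nlinarith
    have hexpt : t ≤ Real.exp t := by
      have := Real.add_one_le_exp t
      linarith
    have hcube : (t+1)^3 ≤ 8 * Real.exp (3*t) := by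
      have h1 : t + 1 ≤ 2 * t := by linarith
      have h3 : (t+1)^3 ≤ (2*t)^3 := pow_le_pow_left₀ (by linarith) h1 3
      have h4 : t^3 ≤ Real.exp t ^ 3 := pow_le_pow_left₀ (le_of_lt ht0) hexpt 3
      have h5 : Real.exp t ^ 3 = Real.exp (3*t) := by
        rw [← Real.exp_nat_mul]; norm_num
      nlinarith
    calc Real.exp (-β * t ^ ((3:ℝ)/2)) * ((t+1)^3 * Real.exp (Real.sqrt 2 * (t+1)))
        ≤ Real.exp (-β * t ^ ((3:ℝ)/2)) *
            ((8 * Real.exp (3*t)) * Real.exp (Real.sqrt 2 * (t+1))) := by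
          apply mul_le_mul_of_nonneg_left _ (Real.exp_nonneg _)
          exact mul_le_mul_of_nonneg_right hcube (Real.exp_nonneg _)
      _ = 8 * (Real.exp (-β * t ^ ((3:ℝ)/2)) * Real.exp (3*t) *
            Real.exp (Real.sqrt 2 * (t+1))) := by ring
      _ = 8 * Real.exp (-β * t ^ ((3:ℝ)/2) + 3*t + Real.sqrt 2 * (t+1)) := by
          rw [← Real.exp_add, ← Real.exp_add]
      _ ≤ 8 * Real.exp (Real.sqrt 2 + -2*t) := by
          have : -β * t ^ ((3:ℝ)/2) + 3*t + Real.sqrt 2 * (t+1) ≤ Real.sqrt 2 + -2*t := by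
            nlinarith
          gcongr
      _ = 8 * Real.exp (Real.sqrt 2) * Real.exp (-2*t) := by
          rw [Real.exp_add]; ring
  have hmeas : MeasurableSet (Set.Ici (-a)) := measurableSet_Ici
  rw [← lintegral_add_compl f hmeas]
  have h1 : ∫⁻ x in Set.Ici (-a), f x ∂μ < ⊤ := by
    have hb : ∫⁻ x in Set.Ici (-a), f x ∂μ ≤ ∫⁻ _ in Set.Ici (-a), 1 ∂μ := by
      apply lintegral_mono
      intro x
      simp only [hf]
      rw [show (1:ℝ≥0∞) = ENNReal.ofReal 1 by simp]
      apply ENNReal.ofReal_le_ofReal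
      have h0 : (0:ℝ) ≤ |x| ^ ((3:ℝ)/2) := Real.rpow_nonneg (abs_nonneg x) _
      calc Real.exp (-β * |x| ^ ((3:ℝ)/2)) ≤ Real.exp 0 :=
            Real.exp_le_exp.mpr (by nlinarith)
        _ = 1 := Real.exp_zero
    rw [setLIntegral_one] at hb
    exact lt_of_le_of_lt (hb.trans (htail a hax₀)) ENNReal.ofReal_lt_top
  have hsub : (Set.Ici (-a))ᶜ ⊆ ⋃ n : ℕ, Set.Ioc (-(a + n + 1)) (-(a + n)) := by
    rw [Set.compl_Ici]
    intro x hx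
    simp only [Set.mem_Iio] at hx
    have hpos : 0 < -x - a := by linarith
    refine Set.mem_iUnion.mpr ⟨⌊-x - a⌋₊, ?_⟩
    have h1 : (⌊-x - a⌋₊ : ℝ) ≤ -x - a := Nat.floor_le hpos.le
    have h2 : -x - a < ⌊-x - a⌋₊ + 1 := Nat.lt_floor_add_one _
    exact ⟨by linarith, by linarith⟩
  have h2 : ∫⁻ x in (Set.Ici (-a))ᶜ, f x ∂μ < ⊤ := by
    have hbound : ∫⁻ x in (Set.Ici (-a))ᶜ, f x ∂μ
        ≤ ∑' n : ℕ, ENNReal.ofReal (Real.exp (-β * (a + n) ^ ((3:ℝ)/2))) *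
            ENNReal.ofReal ((a + n + 1) ^ 3 * Real.exp (Real.sqrt 2 * (a + n + 1))) := by
      calc ∫⁻ x in (Set.Ici (-a))ᶜ, f x ∂μ
          ≤ ∫⁻ x in ⋃ n : ℕ, Set.Ioc (-(a + ↑n + 1)) (-(a + ↑n)), f x ∂μ :=
            lintegral_mono_set hsub
        _ ≤ ∑' n : ℕ, ∫⁻ x in Set.Ioc (-(a + ↑n + 1)) (-(a + ↑n)), f x ∂μ :=
            lintegral_iUnion_le _ _
        _ ≤ ∑' n : ℕ, ENNReal.ofReal (Real.exp (-β * (a + n) ^ ((3:ℝ)/2))) *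
            ENNReal.ofReal ((a + n + 1) ^ 3 * Real.exp (Real.sqrt 2 * (a + n + 1))) := by
            apply ENNReal.tsum_le_tsum
            intro n
            have hn0 : (0:ℝ) ≤ (n:ℝ) := Nat.cast_nonneg n
            calc ∫⁻ x in Set.Ioc (-(a + ↑n + 1)) (-(a + ↑n)), f x ∂μ
                ≤ ∫⁻ _ in Set.Ioc (-(a + ↑n + 1)) (-(a + ↑n)),
                    ENNReal.ofReal (Real.exp (-β * (a + n) ^ ((3:ℝ)/2))) ∂μ := by
                  apply setLIntegral_mono' measurableSet_Ioc
                  intro x hx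
                  simp only [hf]
                  apply ENNReal.ofReal_le_ofReal
                  apply Real.exp_le_exp.mpr
                  have han : (0:ℝ) ≤ a + n := by linarith
                  have hxle : x ≤ -(a + n) := hx.2
                  have hxabs : a + n ≤ |x| := by
                    rw [abs_of_nonpos (by linarith)]
                    linarith
                  have hr := Real.rpow_le_rpow han hxabs (by norm_num : (0:ℝ) ≤ 3/2)
                  nlinarith
              _ = ENNReal.ofReal (Real.exp (-β * (a + n) ^ ((3:ℝ)/2))) *
                    μ (Set.Ioc (-(a + ↑n + 1)) (-(a + ↑n))) := setLIntegral_const _ _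
              _ ≤ ENNReal.ofReal (Real.exp (-β * (a + n) ^ ((3:ℝ)/2))) *
                    ENNReal.ofReal ((a + n + 1) ^ 3 *
                      Real.exp (Real.sqrt 2 * (a + n + 1))) := by
                  gcongr
                  refine (measure_mono (fun x hx => le_of_lt hx.1 : Set.Ioc (-(a + ↑n + 1)) (-(a + ↑n)) ⊆ Set.Ici (-(a + ↑n + 1)))).trans ?_
                  exact htail (a + n + 1) (by linarith)
    have hle : ∀ n : ℕ, ENNReal.ofReal (Real.exp (-β * (a + n) ^ ((3:ℝ)/2))) *
        ENNReal.ofReal ((a + n + 1) ^ 3 * Real.exp (Real.sqrt 2 * (a + n + 1)))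
        ≤ ENNReal.ofReal (8 * Real.exp (Real.sqrt 2) * Real.exp (-2) ^ n) := by
      intro n
      have hn0 : (0:ℝ) ≤ (n:ℝ) := Nat.cast_nonneg n
      rw [← ENNReal.ofReal_mul (Real.exp_nonneg _)]
      apply ENNReal.ofReal_le_ofReal
      have han : a ≤ a + n := by linarith
      have hk := key (a + n) han
      have hmono : Real.exp (-2 * (a + n)) ≤ Real.exp (-2 * n) :=
        Real.exp_le_exp.mpr (by linarith)
      have hpow : Real.exp (-2 * (n:ℝ)) = Real.exp (-2) ^ n := by
        rw [← Real.exp_nat_mul]; ring_nf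
      calc Real.exp (-β * (a + n) ^ ((3:ℝ)/2)) *
            ((a + n + 1) ^ 3 * Real.exp (Real.sqrt 2 * (a + n + 1)))
          ≤ 8 * Real.exp (Real.sqrt 2) * Real.exp (-2 * (a + n)) := hk
        _ ≤ 8 * Real.exp (Real.sqrt 2) * Real.exp (-2 * n) := by
            have h8 : (0:ℝ) ≤ 8 * Real.exp (Real.sqrt 2) := by positivity
            nlinarith
        _ = 8 * Real.exp (Real.sqrt 2) * Real.exp (-2) ^ n := by rw [hpow]
    have hsumm : Summable (fun n : ℕ => 8 * Real.exp (Real.sqrt 2) * Real.exp (-2) ^ n) := by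
      apply Summable.mul_left
      exact summable_geometric_of_lt_one (Real.exp_nonneg _)
        (Real.exp_lt_one_iff.mpr (by norm_num))
    calc ∫⁻ x in (Set.Ici (-a))ᶜ, f x ∂μ
        ≤ ∑' n : ℕ, ENNReal.ofReal (Real.exp (-β * (a + n) ^ ((3:ℝ)/2))) *
            ENNReal.ofReal ((a + n + 1) ^ 3 * Real.exp (Real.sqrt 2 * (a + n + 1))) := hbound
      _ ≤ ∑' n : ℕ, ENNReal.ofReal (8 * Real.exp (Real.sqrt 2) * Real.exp (-2) ^ n) :=
          ENNReal.tsum_le_tsum hle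
      _ = ENNReal.ofReal (∑' n : ℕ, 8 * Real.exp (Real.sqrt 2) * Real.exp (-2) ^ n) :=
          (ENNReal.ofReal_tsum_of_nonneg (fun n => by positivity) hsumm).symm
      _ < ⊤ := ENNReal.ofReal_lt_top
  exact ENNReal.add_lt_top.mpr ⟨h1, h2⟩
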